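/- For all real numbers a, b > 0 with a ≠ b and all v ∈ (0,1), one has L_v(a,b) ≤ L(a♯_v b, a∇_v b) ≤ I(a♯_v b, a∇_v b) ≤ ((a♯_v b) + (a∇_v b))/2. -/

import Mathlib

open Real intervalIntegral MeasureTheory Set

/-- The logarithmic mean of two positive reals. -/
noncomputable def logMean (a b : ℝ) : ℝ :=
  if a = b then a else (b - a) / (Real.log b - Real.log a)

/-- The identric mean of two positive reals. -/
noncomputable def idMean (a b : ℝ) : ℝ :=
  if a = b then a else Real.exp (-1) * (b ^ b / a ^ a) ^ (b - a)⁻¹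

/-- The weighted arithmetic mean `a ∇_v b`. -/
def wArith (v a b : ℝ) : ℝ := (1 - v) * a + v * b

/-- The weighted geometric mean `a ♯_v b`. -/
noncomputable def wGeom (v a b : ℝ) : ℝ := a ^ (1 - v) * b ^ v

/-- The weighted harmonic mean `a !_v b`. -/
noncomputable def wHarm (v a b : ℝ) : ℝ := ((1 - v) / a + v / b)⁻¹

/-- The weighted logarithmic mean `L_v(a,b)` (for `a ≠ b`, `v ∈ (0,1)`). -/
noncomputable def wLog (v a b : ℝ) : ℝ :=
  (1 / (Real.log a - Real.log b)) *
    (((1 - v) / v) * (a - a ^ (1 - v) * b ^ v) + (v / (1 - v)) * (a ^ (1 - v) * b ^ v - b))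

/-- The weighted identric mean `I_v(a,b)` (for `a ≠ b`, `v ∈ (0,1)`). -/
noncomputable def wId (v a b : ℝ) : ℝ :=
  Real.exp (-1) * wArith v a b ^ ((1 - 2 * v) * wArith v a b / (v * (1 - v) * (b - a))) *
    (b ^ (v * b / (1 - v)) / a ^ ((1 - v) * a / v)) ^ (b - a)⁻¹

section helpers

lemma rpow_mix_eq {p q : ℝ} (hp : 0 < p) (hq : 0 < q) (t : ℝ) :
    p ^ (1-t) * q ^ t = Real.exp (Real.log p + (Real.log q - Real.log p) * t) := by
  rw [Real.rpow_def_of_pos hp, Real.rpow_def_of_pos hq, ← Real.exp_add]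
  ring_nf

lemma intervalIntegrable_rpow_mix {p q : ℝ} (hp : 0 < p) (hq : 0 < q) :
    IntervalIntegrable (fun t => p ^ (1-t) * q ^ t) volume 0 1 := by
  have : (fun t : ℝ => p ^ (1-t) * q ^ t)
      = fun t => Real.exp (Real.log p + (Real.log q - Real.log p) * t) :=
    funext (rpow_mix_eq hp hq)
  rw [this]
  exact (Continuous.rexp (by continuity)).intervalIntegrable 0 1

lemma integral_rpow_mix {p q : ℝ} (hp : 0 < p) (hq : 0 < q) (hpq : p ≠ q) :
    ∫ t in (0:ℝ)..1, p ^ (1-t) * q ^ t = (q - p) / (Real.log q - Real.log p) := by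
  have hlog : Real.log q - Real.log p ≠ 0 := by
    have := Real.log_injOn_pos.ne (Set.mem_Ioi.2 hq) (Set.mem_Ioi.2 hp) (Ne.symm hpq)
    intro h; apply this; linarith
  have hderiv : ∀ t ∈ Set.uIcc (0:ℝ) 1, HasDerivAt
      (fun t => Real.exp (Real.log p + (Real.log q - Real.log p) * t) / (Real.log q - Real.log p))
      (Real.exp (Real.log p + (Real.log q - Real.log p) * t)) t := by
    intro t _
    have h1 : HasDerivAt (fun t : ℝ => Real.log p + (Real.log q - Real.log p) * t)
        (Real.log q - Real.log p) t := by
      simpa using ((hasDerivAt_id t).const_mul (Real.log q - Real.log p)).const_add (Real.log p)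
    have := (h1.exp).div_const (Real.log q - Real.log p)
    simpa [mul_div_assoc, mul_div_cancel_right₀, hlog] using this
  have hint : IntervalIntegrable
      (fun t => Real.exp (Real.log p + (Real.log q - Real.log p) * t)) volume 0 1 :=
    (Continuous.rexp (by continuity)).intervalIntegrable 0 1
  calc ∫ t in (0:ℝ)..1, p ^ (1-t) * q ^ t
      = ∫ t in (0:ℝ)..1, Real.exp (Real.log p + (Real.log q - Real.log p) * t) := by
        simp_rw [rpow_mix_eq hp hq]
    _ = Real.exp (Real.log p + (Real.log q - Real.log p) * 1) / (Real.log q - Real.log p)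
        - Real.exp (Real.log p + (Real.log q - Real.log p) * 0) / (Real.log q - Real.log p) :=
        intervalIntegral.integral_eq_sub_of_hasDerivAt hderiv hint
    _ = (q - p) / (Real.log q - Real.log p) := by
        rw [mul_one, mul_zero, add_zero]
        rw [show Real.log p + (Real.log q - Real.log p) = Real.log q by ring]
        rw [Real.exp_log hq, Real.exp_log hp, div_sub_div_same]

variable {G A : ℝ}

lemma line_pos (hG : 0 < G) (hA : 0 < A) {t : ℝ} (ht : t ∈ Set.uIcc (0:ℝ) 1) :
    0 < (1-t)*G + t*A := by
  rw [Set.uIcc_of_le (by norm_num : (0:ℝ) ≤ 1)] at ht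
  obtain ⟨h0, h1⟩ := ht
  rcases eq_or_lt_of_le h0 with h | h
  · simp [← h, hG]
  rcases eq_or_lt_of_le h1 with h' | h'
  · simp [h', hA]
  have : 0 < (1-t)*G := mul_pos (by linarith) hG
  have : 0 < t*A := mul_pos h hA
  linarith

lemma line_hasDerivAt (t : ℝ) : HasDerivAt (fun t : ℝ => (1-t)*G + t*A) (A - G) t := by
  have : HasDerivAt (fun t : ℝ => (1-t)*G + t*A) ((-1)*G + 1*A) t :=
    (((hasDerivAt_id t).const_sub 1).mul_const G).add ((hasDerivAt_id t).mul_const A)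
  convert this using 1; ring

lemma line_continuous : Continuous (fun t : ℝ => (1-t)*G + t*A) := by continuity

lemma integral_log_line (hG : 0 < G) (hA : A ≠ G) (hApos : 0 < A) :
    ∫ t in (0:ℝ)..1, Real.log ((1-t)*G + t*A)
      = (A * Real.log A - G * Real.log G)/(A-G) - 1 := by
  have hAG : A - G ≠ 0 := sub_ne_zero.2 hA
  have hderiv : ∀ t ∈ Set.uIcc (0:ℝ) 1, HasDerivAt
      (fun t => (((1-t)*G + t*A) * (Real.log ((1-t)*G + t*A) - 1)) / (A - G))
      (Real.log ((1-t)*G + t*A)) t := by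
    intro t ht
    have hpos := line_pos hG hApos ht
    have h1 : HasDerivAt (fun t : ℝ => (1-t)*G + t*A) (A - G) t := line_hasDerivAt t
    have hlog : HasDerivAt (fun t => Real.log ((1-t)*G + t*A)) ((A-G) / ((1-t)*G + t*A)) t := by
      have := (Real.hasDerivAt_log hpos.ne').comp t h1
      simpa [Function.comp_def, div_eq_inv_mul] using this
    have := (h1.mul (hlog.sub_const 1)).div_const (A - G)
    refine this.congr_deriv ?_
    rw [mul_div_cancel₀ (A - G) hpos.ne']
    field_simp
    ring
  have hint : IntervalIntegrable (fun t => Real.log ((1-t)*G + t*A)) volume 0 1 :=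
    (line_continuous.continuousOn.log
      (fun t ht => (line_pos hG hApos ht).ne')).intervalIntegrable
  rw [intervalIntegral.integral_eq_sub_of_hasDerivAt hderiv hint]
  have e1 : (1-(1:ℝ))*G + 1*A = A := by ring
  have e0 : (1-(0:ℝ))*G + 0*A = G := by ring
  rw [e1, e0]
  field_simp
  ring

lemma integral_inv_line (hG : 0 < G) (hA : A ≠ G) (hApos : 0 < A) :
    ∫ t in (0:ℝ)..1, ((1-t)*G + t*A)⁻¹ = (Real.log A - Real.log G)/(A-G) := by
  have hAG : A - G ≠ 0 := sub_ne_zero.2 hA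
  have hderiv : ∀ t ∈ Set.uIcc (0:ℝ) 1, HasDerivAt
      (fun t => Real.log ((1-t)*G + t*A) / (A - G)) (((1-t)*G + t*A)⁻¹) t := by
    intro t ht
    have hpos := line_pos hG hApos ht
    have hlog : HasDerivAt (fun t => Real.log ((1-t)*G + t*A)) ((A-G) / ((1-t)*G + t*A)) t := by
      have := (Real.hasDerivAt_log hpos.ne').comp t (line_hasDerivAt t)
      simpa [Function.comp_def, div_eq_inv_mul] using this
    have := hlog.div_const (A - G)
    refine this.congr_deriv ?_
    field_simp
  have hint : IntervalIntegrable (fun t => ((1-t)*G + t*A)⁻¹) volume 0 1 := by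
    apply ContinuousOn.intervalIntegrable
    intro t ht
    exact (ContinuousAt.inv₀ line_continuous.continuousAt
      (line_pos hG hApos ht).ne').continuousWithinAt
  rw [intervalIntegral.integral_eq_sub_of_hasDerivAt hderiv hint]
  have e1 : (1-(1:ℝ))*G + 1*A = A := by ring
  have e0 : (1-(0:ℝ))*G + 0*A = G := by ring
  rw [e1, e0, div_sub_div_same]

lemma integral_line : ∫ t in (0:ℝ)..1, ((1-t)*G + t*A) = (G+A)/2 := by
  have hderiv : ∀ t ∈ Set.uIcc (0:ℝ) 1, HasDerivAt
      (fun t : ℝ => t*G - t^2/2*G + t^2/2*A) ((1-t)*G + t*A) t := by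
    intro t _
    have h1 : HasDerivAt (fun t : ℝ => t*G) G t := by
      simpa using (hasDerivAt_id t).mul_const G
    have h2 : HasDerivAt (fun t : ℝ => t^2/2*G) (t*G) t := by
      have := ((hasDerivAt_pow 2 t).div_const 2).mul_const G
      simpa using this
    have h3 : HasDerivAt (fun t : ℝ => t^2/2*A) (t*A) t := by
      have := ((hasDerivAt_pow 2 t).div_const 2).mul_const A
      simpa using this
    have := (h1.sub h2).add h3
    refine this.congr_deriv ?_; ring
  have hint : IntervalIntegrable (fun t : ℝ => (1-t)*G + t*A) volume 0 1 :=
    line_continuous.intervalIntegrable 0 1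
  rw [intervalIntegral.integral_eq_sub_of_hasDerivAt hderiv hint]
  ring

lemma intervalIntegrable_log_line (hG : 0 < G) (hApos : 0 < A) :
    IntervalIntegrable (fun t => Real.log ((1-t)*G + t*A)) volume 0 1 :=
  (line_continuous.continuousOn.log
    (fun t ht => (line_pos hG hApos ht).ne')).intervalIntegrable

end helpers

/-- `L_v(a,b) ≤ L(a♯_v b, a∇_v b) ≤ I(a♯_v b, a∇_v b) ≤ ((a♯_v b)+(a∇_v b))/2`. -/
theorem wLog_le_logMean_le_idMean_le_arith (a b v : ℝ) (ha : 0 < a) (hb : 0 < b) (hab : a ≠ b)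
    (hv : v ∈ Set.Ioo (0 : ℝ) 1) :
    wLog v a b ≤ logMean (wGeom v a b) (wArith v a b) ∧
      logMean (wGeom v a b) (wArith v a b) ≤ idMean (wGeom v a b) (wArith v a b) ∧
        idMean (wGeom v a b) (wArith v a b) ≤ (wGeom v a b + wArith v a b) / 2 := by
  obtain ⟨hv0, hv1⟩ := hv
  have hv1' : 0 < 1 - v := by linarith
  set G := wGeom v a b with hGdef
  set A := wArith v a b with hAdef
  have hG : 0 < G := mul_pos (Real.rpow_pos_of_pos ha _) (Real.rpow_pos_of_pos hb _)
  have hA : 0 < A := by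
    have h1 : 0 < (1-v)*a := mul_pos hv1' ha
    have h2 : 0 < v*b := mul_pos hv0 hb
    show (0:ℝ) < (1-v)*a + v*b
    linarith
  have hxy : Real.log a ≠ Real.log b := fun h =>
    hab (Real.log_injOn_pos (Set.mem_Ioi.2 ha) (Set.mem_Ioi.2 hb) h)
  have hGexp : G = Real.exp ((1-v)*Real.log a + v*Real.log b) := by
    show a ^ (1-v) * b ^ v = Real.exp ((1-v)*Real.log a + v*Real.log b)
    rw [Real.rpow_def_of_pos ha, Real.rpow_def_of_pos hb, ← Real.exp_add]
    ring_nf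
  have hlogG : Real.log G = (1-v)*Real.log a + v*Real.log b := by
    rw [hGexp, Real.log_exp]
  -- G < A
  have hGA : G < A := by
    have := strictConvexOn_exp.2 (Set.mem_univ (Real.log a)) (Set.mem_univ (Real.log b))
      hxy hv1' hv0 (by ring)
    simp only [smul_eq_mul, Real.exp_log ha, Real.exp_log hb] at this
    rw [hGexp]
    show Real.exp ((1-v)*Real.log a + v*Real.log b) < (1-v)*a + v*b
    exact this
  have hlogGA : Real.log G < Real.log A := Real.log_lt_log hG hGA
  have hAG : A - G ≠ 0 := sub_ne_zero.2 hGA.ne'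
  -- a ≠ G, b ≠ G
  have haG : a ≠ G := by
    intro h
    apply hxy
    have h2 : Real.log a = (1-v)*Real.log a + v*Real.log b := by rw [← hlogG, ← h]
    have h3 : v * (Real.log b - Real.log a) = 0 := by linarith
    rcases mul_eq_zero.1 h3 with h4 | h4
    · exact absurd h4 hv0.ne'
    · linarith
  have hbG : b ≠ G := by
    intro h
    apply hxy
    have h2 : Real.log b = (1-v)*Real.log a + v*Real.log b := by rw [← hlogG, ← h]
    have h3 : (1-v) * (Real.log a - Real.log b) = 0 := by linarith
    rcases mul_eq_zero.1 h3 with h4 | h4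
    · exact absurd h4 hv1'.ne'
    · linarith
  -- closed form of wLog
  have hwlog : wLog v a b = (1-v) * ((G - a)/(Real.log G - Real.log a))
      + v * ((b - G)/(Real.log b - Real.log G)) := by
    have hXY : Real.log a - Real.log b ≠ 0 := sub_ne_zero.2 hxy
    have hYX : Real.log b - Real.log a ≠ 0 := fun h => hXY (by linarith)
    have e1 : Real.log G - Real.log a = v*(Real.log b - Real.log a) := by
      rw [hlogG]; ring
    have e2 : Real.log b - Real.log G = (1-v)*(Real.log b - Real.log a) := by
      rw [hlogG]; ring
    unfold wLog
    rw [show a ^ (1-v) * b ^ v = G from rfl, e1, e2]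
    field_simp
    ring
  -- value c = log of idMean G A
  set c : ℝ := (A * Real.log A - G * Real.log G)/(A-G) - 1 with hcdef
  have hidm : idMean G A = Real.exp c := by
    unfold idMean
    rw [if_neg hGA.ne]
    have hpow : (A ^ A / G ^ G : ℝ) ^ (A-G)⁻¹
        = Real.exp ((A * Real.log A - G * Real.log G)/(A-G)) := by
      rw [Real.rpow_def_of_pos (div_pos (Real.rpow_pos_of_pos hA _) (Real.rpow_pos_of_pos hG _)),
        Real.log_div (Real.rpow_pos_of_pos hA _).ne' (Real.rpow_pos_of_pos hG _).ne',
        Real.log_rpow hA, Real.log_rpow hG]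
      rw [div_eq_mul_inv]
    rw [hpow, ← Real.exp_add, hcdef,
      show (-1 : ℝ) + (A * Real.log A - G * Real.log G)/(A-G)
        = (A * Real.log A - G * Real.log G)/(A-G) - 1 by ring]
  have hlogm : logMean G A = (A - G)/(Real.log A - Real.log G) := by
    unfold logMean; rw [if_neg hGA.ne]
  have hIlog := integral_log_line hG hGA.ne' hA
  -- Part 3 : idMean ≤ (G+A)/2
  have part3 : idMean G A ≤ (G + A)/2 := by
    set m : ℝ := (G+A)/2 with hmdef
    have hm : 0 < m := by unfold m; linarith
    have key : c ≤ Real.log m := by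
      have hmono : ∫ t in (0:ℝ)..1, Real.log ((1-t)*G + t*A)
          ≤ ∫ t in (0:ℝ)..1, (Real.log m - 1 + ((1-t)*G + t*A)/m) := by
        apply intervalIntegral.integral_mono_on (by norm_num)
          (intervalIntegrable_log_line hG hA)
          ((_root_.intervalIntegrable_const).add ((line_continuous.intervalIntegrable 0 1).div_const m))
        intro t ht
        have hu : 0 < (1-t)*G + t*A := line_pos hG hA
          (by rwa [Set.uIcc_of_le (by norm_num : (0:ℝ) ≤ 1)])
        have := Real.log_le_sub_one_of_pos (div_pos hu hm)
        rw [Real.log_div hu.ne' hm.ne'] at this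
        linarith
      have hrhs : ∫ t in (0:ℝ)..1, (Real.log m - 1 + ((1-t)*G + t*A)/m) = Real.log m := by
        rw [intervalIntegral.integral_add _root_.intervalIntegrable_const
          ((line_continuous.intervalIntegrable 0 1).div_const m),
          intervalIntegral.integral_div, integral_line, intervalIntegral.integral_const]
        unfold m
        field_simp
        simp
      rw [hIlog] at hmono
      rw [hrhs] at hmono
      unfold c
      linarith
    calc idMean G A = Real.exp c := hidm
      _ ≤ Real.exp (Real.log m) := Real.exp_le_exp.2 key
      _ = m := Real.exp_log hm
  -- Part 2 : logMean ≤ idMean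
  have part2 : logMean G A ≤ idMean G A := by
    have key : Real.exp (-c) ≤ (Real.log A - Real.log G)/(A-G) := by
      rw [← integral_inv_line hG hGA.ne' hA]
      have hmono : ∫ t in (0:ℝ)..1, Real.exp (-c) * (1 + c - Real.log ((1-t)*G + t*A))
          ≤ ∫ t in (0:ℝ)..1, ((1-t)*G + t*A)⁻¹ := by
        apply intervalIntegral.integral_mono_on (by norm_num)
        · exact ((_root_.intervalIntegrable_const.sub
            (intervalIntegrable_log_line hG hA)).const_mul _)
        · apply ContinuousOn.intervalIntegrable
          intro t ht
          exact (ContinuousAt.inv₀ line_continuous.continuousAt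
            (line_pos hG hA ht).ne').continuousWithinAt
        intro t ht
        have hu : 0 < (1-t)*G + t*A := line_pos hG hA
          (by rwa [Set.uIcc_of_le (by norm_num : (0:ℝ) ≤ 1)])
        have h1 := Real.add_one_le_exp (c - Real.log ((1-t)*G + t*A))
        calc Real.exp (-c) * (1 + c - Real.log ((1-t)*G + t*A))
            ≤ Real.exp (-c) * Real.exp (c - Real.log ((1-t)*G + t*A)) := by
              apply mul_le_mul_of_nonneg_left _ (Real.exp_pos _).le
              linarith
          _ = ((1-t)*G + t*A)⁻¹ := by
              rw [← Real.exp_add,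
                show -c + (c - Real.log ((1-t)*G + t*A)) = -Real.log ((1-t)*G + t*A) by ring,
                Real.exp_neg, Real.exp_log hu]
      have hlhs : ∫ t in (0:ℝ)..1, Real.exp (-c) * (1 + c - Real.log ((1-t)*G + t*A))
          = Real.exp (-c) := by
        rw [intervalIntegral.integral_const_mul,
          intervalIntegral.integral_sub _root_.intervalIntegrable_const
            (intervalIntegrable_log_line hG hA),
          hIlog, intervalIntegral.integral_const]
        simp only [smul_eq_mul, mul_one]
        rw [hcdef]
        ring
      rw [← hlhs]
      exact hmono
    rw [hlogm, hidm]
    have h2 : (A - G)/(Real.log A - Real.log G) = ((Real.log A - Real.log G)/(A-G))⁻¹ := by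
      rw [inv_div]
    rw [h2, show Real.exp c = (Real.exp (-c))⁻¹ by rw [Real.exp_neg, inv_inv]]
    exact inv_anti₀ (Real.exp_pos _) key
  -- Part 1 : wLog ≤ logMean
  have part1 : wLog v a b ≤ logMean G A := by
    have hJ1 : ∫ t in (0:ℝ)..1, a ^ (1-t) * G ^ t
        = (G - a)/(Real.log G - Real.log a) := integral_rpow_mix ha hG haG
    have hJ1' : ∫ t in (0:ℝ)..1, G ^ (1-t) * a ^ t
        = (G - a)/(Real.log G - Real.log a) := by
      rw [integral_rpow_mix hG ha (Ne.symm haG), ← neg_sub a G,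
        ← neg_sub (Real.log a) (Real.log G), neg_div_neg_eq]
    have hJ2 : ∫ t in (0:ℝ)..1, G ^ (1-t) * b ^ t
        = (b - G)/(Real.log b - Real.log G) := integral_rpow_mix hG hb (Ne.symm hbG)
    have hJ2' : ∫ t in (0:ℝ)..1, b ^ (1-t) * G ^ t
        = (b - G)/(Real.log b - Real.log G) := by
      rw [integral_rpow_mix hb hG hbG, ← neg_sub G b,
        ← neg_sub (Real.log G) (Real.log b), neg_div_neg_eq]
    have hK : ∫ t in (0:ℝ)..1, G ^ (1-t) * A ^ t
        = (A - G)/(Real.log A - Real.log G) := integral_rpow_mix hG hA hGA.ne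
    have hK' : ∫ t in (0:ℝ)..1, A ^ (1-t) * G ^ t
        = (A - G)/(Real.log A - Real.log G) := by
      rw [integral_rpow_mix hA hG hGA.ne', ← neg_sub A G,
        ← neg_sub (Real.log A) (Real.log G), neg_div_neg_eq]
    -- pointwise inequality
    have hpt : ∀ t ∈ Set.Icc (0:ℝ) 1,
        (1-v) * (a ^ (1-t) * G ^ t) + v * (G ^ (1-t) * b ^ t)
          + ((1-v) * (G ^ (1-t) * a ^ t) + v * (b ^ (1-t) * G ^ t))
        ≤ G ^ (1-t) * A ^ t + A ^ (1-t) * G ^ t := by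
      intro t ht
      obtain ⟨ht0, ht1⟩ := ht
      have hcv : ∀ s : ℝ, 0 ≤ s → s ≤ 1 → (1-v) * a ^ s + v * b ^ s ≤ A ^ s := by
        intro s hs0 hs1
        have := (Real.concaveOn_rpow hs0 hs1).2 (Set.mem_Ici.2 ha.le) (Set.mem_Ici.2 hb.le)
          hv1'.le hv0.le (by ring)
        simpa [smul_eq_mul, hAdef, wArith] using this
      have hc1 := hcv (1-t) (by linarith) (by linarith)
      have hc2 := hcv t ht0 ht1
      have m1 := mul_le_mul_of_nonneg_left hc1 (Real.rpow_pos_of_pos hG t).le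
      have m2 := mul_le_mul_of_nonneg_left hc2 (Real.rpow_pos_of_pos hG (1-t)).le
      nlinarith [m1, m2]
    have hmono := intervalIntegral.integral_mono_on (by norm_num : (0:ℝ) ≤ 1)
      ((((intervalIntegrable_rpow_mix ha hG).const_mul _).add
        ((intervalIntegrable_rpow_mix hG hb).const_mul _)).add
        (((intervalIntegrable_rpow_mix hG ha).const_mul _).add
        ((intervalIntegrable_rpow_mix hb hG).const_mul _)))
      ((intervalIntegrable_rpow_mix hG hA).add (intervalIntegrable_rpow_mix hA hG))
      hpt
    rw [intervalIntegral.integral_add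
        (((intervalIntegrable_rpow_mix ha hG).const_mul _).add
          ((intervalIntegrable_rpow_mix hG hb).const_mul _))
        (((intervalIntegrable_rpow_mix hG ha).const_mul _).add
          ((intervalIntegrable_rpow_mix hb hG).const_mul _)),
      intervalIntegral.integral_add ((intervalIntegrable_rpow_mix ha hG).const_mul _)
        ((intervalIntegrable_rpow_mix hG hb).const_mul _),
      intervalIntegral.integral_add ((intervalIntegrable_rpow_mix hG ha).const_mul _)
        ((intervalIntegrable_rpow_mix hb hG).const_mul _),
      intervalIntegral.integral_add (intervalIntegrable_rpow_mix hG hA)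
        (intervalIntegrable_rpow_mix hA hG),
      intervalIntegral.integral_const_mul, intervalIntegral.integral_const_mul,
      intervalIntegral.integral_const_mul, intervalIntegral.integral_const_mul,
      hJ1, hJ1', hJ2, hJ2', hK, hK'] at hmono
    rw [hwlog, hlogm]
    linarith
  exact ⟨part1, part2, part3⟩
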